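/- Let τ = (1+√5)/2 be the golden ratio. Identify ℝ³ with the pure quaternions via (x,y,z) ↦ x i + y j + z k. Let R be the set of the 30 unit roots of H₃, namely ±i, ±j, ±k together with all cyclic permutations of the pure quaternions ½(±1·i ± τ·j ± τ⁻¹·k). Then the subgroup of the unit group ℍˣ of the real quaternions generated by all products p·q with p, q ∈ R has exactly 120 elements; that is, the 30 reflections of the icosahedral group H₃ generate exactly 120 rotors. -/

import Mathlib

noncomputable section

/-- The golden ratio `τ = (1+√5)/2`. -/
def τ : ℝ := (1 + Real.sqrt 5) / 2

/-- The quaternion unit `i`. -/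
def qi : Quaternion ℝ := ⟨0, 1, 0, 0⟩
/-- The quaternion unit `j`. -/
def qj : Quaternion ℝ := ⟨0, 0, 1, 0⟩
/-- The quaternion unit `k`. -/
def qk : Quaternion ℝ := ⟨0, 0, 0, 1⟩

/-- The sign set `{1, -1}`. -/
def pm : Set ℝ := {1, -1}

/-- The 30 unit roots of `H₃`: `±i, ±j, ±k` together with all cyclic
permutations of the pure quaternions `½(±1·i ± τ·j ± τ⁻¹·k)`. -/
def rootsH3 : Set (Quaternion ℝ) :=
  {x | (∃ ε ∈ pm, x = ε • qi ∨ x = ε • qj ∨ x = ε • qk) ∨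
    (∃ ε₁ ∈ pm, ∃ ε₂ ∈ pm, ∃ ε₃ ∈ pm,
      (x = (2 : ℝ)⁻¹ • (ε₁ • qi + (ε₂ * τ) • qj + (ε₃ * τ⁻¹) • qk) ∨
       x = (2 : ℝ)⁻¹ • ((ε₃ * τ⁻¹) • qi + ε₁ • qj + (ε₂ * τ) • qk) ∨
       x = (2 : ℝ)⁻¹ • ((ε₂ * τ) • qi + (ε₃ * τ⁻¹) • qj + ε₁ • qk)))}

/-- The set of units of ℍ of the form `p·q` with `p, q` unit roots of `H₃`
(the rotors encoding composed reflections of the icosahedral group). -/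
def rotorGenH3 : Set (Quaternion ℝ)ˣ :=
  {u | ∃ p ∈ rootsH3, ∃ q ∈ rootsH3, (u : Quaternion ℝ) = p * q}

-- ===== auxiliary machinery =====
set_option maxRecDepth 100000

abbrev QZ5 := Quaternion (Zsqrtd 5)

instance : DecidableEq QZ5 := fun _ _ => decidable_of_iff _ QuaternionAlgebra.ext_iff.symm

lemma sqrt5_sq : Real.sqrt 5 * Real.sqrt 5 = 5 := Real.mul_self_sqrt (by norm_num)

lemma ns5 : ∀ n : ℤ, (5:ℤ) ≠ n * n := by
  intro n h
  have h1 : n ≤ 2 := by nlinarith [sq_nonneg (n-2)]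
  have h2 : -2 ≤ n := by nlinarith [sq_nonneg (n+2)]
  interval_cases n <;> omega

def ψ : Zsqrtd 5 →+* ℝ := Zsqrtd.lift ⟨Real.sqrt 5, by rw [sqrt5_sq]; norm_num⟩

lemma ψ_apply (a : Zsqrtd 5) : ψ a = a.re + a.im * Real.sqrt 5 := rfl

lemma ψ_inj : Function.Injective ψ := Zsqrtd.lift_injective _ ns5

lemma one_mk {R : Type*} [CommRing R] : (1 : Quaternion R) = ⟨1, 0, 0, 0⟩ := rfl
lemma zero_mk {R : Type*} [CommRing R] : (0 : Quaternion R) = ⟨0, 0, 0, 0⟩ := rfl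
lemma smul_mk' (r a b c d : ℝ) :
    @HSMul.hSMul ℝ (Quaternion ℝ) (Quaternion ℝ) _ r ⟨a, b, c, d⟩ = ⟨r * a, r * b, r * c, r * d⟩ := rfl
lemma add_mk' (a b c d a' b' c' d' : ℝ) :
    @HAdd.hAdd (Quaternion ℝ) (Quaternion ℝ) (Quaternion ℝ) _ ⟨a, b, c, d⟩ ⟨a', b', c', d'⟩ =
      ⟨a + a', b + b', c + c', d + d'⟩ := rfl
lemma mul_mk' (a b c d a' b' c' d' : ℝ) :
    @HMul.hMul (Quaternion ℝ) (Quaternion ℝ) (Quaternion ℝ) _ ⟨a, b, c, d⟩ ⟨a', b', c', d'⟩ =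
      ⟨a * a' - b * b' - c * c' - d * d', a * b' + b * a' + c * d' - d * c',
        a * c' - b * d' + c * a' + d * b', a * d' + b * c' - c * b' + d * a'⟩ :=
  QuaternionAlgebra.ext (Quaternion.re_mul _ _) (Quaternion.imI_mul _ _)
    (Quaternion.imJ_mul _ _) (Quaternion.imK_mul _ _)

def eQ : QZ5 →+* Quaternion ℝ where
  toFun a := ⟨ψ a.re, ψ a.imI, ψ a.imJ, ψ a.imK⟩
  map_one' := by ext <;> simp [one_mk]
  map_zero' := by ext <;> simp [zero_mk]
  map_add' a b := by ext <;> simp [add_mk']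
  map_mul' a b := by
    ext <;>
    simp only [Quaternion.re_mul, Quaternion.imI_mul, Quaternion.imJ_mul,
      Quaternion.imK_mul, mul_mk', map_add, map_sub, map_mul, map_neg, map_one] <;>
    ring

lemma eQ_apply (a : QZ5) : eQ a = ⟨ψ a.re, ψ a.imI, ψ a.imJ, ψ a.imK⟩ := rfl

def fq (a : QZ5) : Quaternion ℝ := (4:ℝ)⁻¹ • eQ a

lemma eQ_inj : Function.Injective eQ := by
  intro a b h
  rw [eQ_apply, eQ_apply] at h
  obtain ⟨h1, h2, h3, h4⟩ := QuaternionAlgebra.mk.inj h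
  exact QuaternionAlgebra.ext (ψ_inj h1) (ψ_inj h2) (ψ_inj h3) (ψ_inj h4)

lemma fq_inj : Function.Injective fq := by
  intro a b h
  apply eQ_inj
  have := congrArg (fun x => (4:ℝ) • x) h
  simpa [fq, smul_smul] using this

def q4one : QZ5 := ⟨⟨4,0⟩, 0, 0, 0⟩

lemma fq_mk (a b c d : ℤ√5) :
    fq ⟨a, b, c, d⟩ = ⟨(4:ℝ)⁻¹ * ψ a, (4:ℝ)⁻¹ * ψ b, (4:ℝ)⁻¹ * ψ c, (4:ℝ)⁻¹ * ψ d⟩ := rfl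

lemma fq_one : fq q4one = 1 := by
  simp only [q4one, fq_mk, one_mk]
  ext <;> simp [ψ_apply] <;> norm_num

lemma four_eq : (4 : Quaternion ℝ) = ((4:ℝ) : Quaternion ℝ) := by norm_cast

lemma fq_mul (a b c : QZ5) (h : a * b = 4 * c) : fq a * fq b = fq c := by
  unfold fq
  rw [smul_mul_smul_comm, ← map_mul, h, map_mul, map_ofNat, four_eq,
    Quaternion.coe_mul_eq_smul, smul_smul]
  norm_num

lemma tau_inv : τ⁻¹ = (Real.sqrt 5 - 1) / 2 := by
  have h : τ * ((Real.sqrt 5 - 1) / 2) = 1 := by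
    rw [τ]; nlinarith [sqrt5_sq]
  exact inv_eq_of_mul_eq_one_right h

lemma br_i (n : ℤ) : fq ⟨0, ⟨4*n,0⟩, 0, 0⟩ = (n:ℝ) • qi := by
  simp only [fq_mk, qi, smul_mk']
  ext <;> simp [ψ_apply] <;> push_cast <;> ring

lemma br_j (n : ℤ) : fq ⟨0, 0, ⟨4*n,0⟩, 0⟩ = (n:ℝ) • qj := by
  simp only [fq_mk, qj, smul_mk']
  ext <;> simp [ψ_apply] <;> push_cast <;> ring

lemma br_k (n : ℤ) : fq ⟨0, 0, 0, ⟨4*n,0⟩⟩ = (n:ℝ) • qk := by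
  simp only [fq_mk, qk, smul_mk']
  ext <;> simp [ψ_apply] <;> push_cast <;> ring

lemma br1 (n₁ n₂ n₃ : ℤ) : fq ⟨0, ⟨2*n₁,0⟩, ⟨n₂,n₂⟩, ⟨-n₃,n₃⟩⟩ =
    (2:ℝ)⁻¹ • (((n₁:ℝ)) • qi + (((n₂:ℝ)) * τ) • qj + (((n₃:ℝ)) * τ⁻¹) • qk) := by
  simp only [tau_inv]
  simp only [fq_mk, qi, qj, qk, smul_mk', add_mk']
  ext <;> simp [ψ_apply, τ] <;> push_cast <;> ring

lemma br2 (n₁ n₂ n₃ : ℤ) : fq ⟨0, ⟨-n₃,n₃⟩, ⟨2*n₁,0⟩, ⟨n₂,n₂⟩⟩ =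
    (2:ℝ)⁻¹ • ((((n₃:ℝ)) * τ⁻¹) • qi + ((n₁:ℝ)) • qj + (((n₂:ℝ)) * τ) • qk) := by
  simp only [tau_inv]
  simp only [fq_mk, qi, qj, qk, smul_mk', add_mk']
  ext <;> simp [ψ_apply, τ] <;> push_cast <;> ring

lemma br3 (n₁ n₂ n₃ : ℤ) : fq ⟨0, ⟨n₂,n₂⟩, ⟨-n₃,n₃⟩, ⟨2*n₁,0⟩⟩ =
    (2:ℝ)⁻¹ • ((((n₂:ℝ)) * τ) • qi + (((n₃:ℝ)) * τ⁻¹) • qj + ((n₁:ℝ)) • qk) := by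
  simp only [tau_inv]
  simp only [fq_mk, qi, qj, qk, smul_mk', add_mk']
  ext <;> simp [ψ_apply, τ] <;> push_cast <;> ring

def pmz : Finset ℤ := {1, -1}

def R0i : Finset QZ5 := pmz.image fun n => ⟨0, ⟨4*n,0⟩, 0, 0⟩
def R0j : Finset QZ5 := pmz.image fun n => ⟨0, 0, ⟨4*n,0⟩, 0⟩
def R0k : Finset QZ5 := pmz.image fun n => ⟨0, 0, 0, ⟨4*n,0⟩⟩
def R1 : Finset QZ5 :=
  (pmz ×ˢ pmz ×ˢ pmz).image fun s => ⟨0, ⟨2*s.1,0⟩, ⟨s.2.1,s.2.1⟩, ⟨-s.2.2,s.2.2⟩⟩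
def R2 : Finset QZ5 :=
  (pmz ×ˢ pmz ×ˢ pmz).image fun s => ⟨0, ⟨-s.2.2,s.2.2⟩, ⟨2*s.1,0⟩, ⟨s.2.1,s.2.1⟩⟩
def R3 : Finset QZ5 :=
  (pmz ×ˢ pmz ×ˢ pmz).image fun s => ⟨0, ⟨s.2.1,s.2.1⟩, ⟨-s.2.2,s.2.2⟩, ⟨2*s.1,0⟩⟩
def Rhat : Finset QZ5 := R0i ∪ R0j ∪ R0k ∪ R1 ∪ R2 ∪ R3

def Shat : Finset QZ5 := {⟨⟨-4,0⟩,⟨0,0⟩,⟨0,0⟩,⟨0,0⟩⟩, ⟨⟨-2,0⟩,⟨-2,0⟩,⟨-2,0⟩,⟨-2,0⟩⟩, ⟨⟨-2,0⟩,⟨-2,0⟩,⟨-2,0⟩,⟨2,0⟩⟩, ⟨⟨-2,0⟩,⟨-2,0⟩,⟨2,0⟩,⟨-2,0⟩⟩, ⟨⟨-2,0⟩,⟨-2,0⟩,⟨2,0⟩,⟨2,0⟩⟩, ⟨⟨-2,0⟩,⟨-1,-1⟩,⟨0,0⟩,⟨-1,1⟩⟩, ⟨⟨-2,0⟩,⟨-1,-1⟩,⟨0,0⟩,⟨1,-1⟩⟩,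 ⟨⟨-2,0⟩,⟨-1,1⟩,⟨-1,-1⟩,⟨0,0⟩⟩, ⟨⟨-2,0⟩,⟨-1,1⟩,⟨1,1⟩,⟨0,0⟩⟩, ⟨⟨-2,0⟩,⟨0,0⟩,⟨-1,1⟩,⟨-1,-1⟩⟩, ⟨⟨-2,0⟩,⟨0,0⟩,⟨-1,1⟩,⟨1,1⟩⟩, ⟨⟨-2,0⟩,⟨0,0⟩,⟨1,-1⟩,⟨-1,-1⟩⟩, ⟨⟨-2,0⟩,⟨0,0⟩,⟨1,-1⟩,⟨1,1⟩⟩, ⟨⟨-2,0⟩,⟨1,-1⟩,⟨-1,-1⟩,⟨0,0⟩⟩, ⟨⟨-2,0⟩,⟨1,-1⟩,⟨1,1⟩,⟨0,0⟩⟩, ⟨⟨-2,0⟩,⟨1,1⟩,⟨0,0⟩,⟨-1,1⟩⟩, ⟨⟨-2,0⟩,⟨1,1⟩,⟨0,0⟩,⟨1,-1⟩⟩, ⟨⟨-2,0⟩,⟨2,0⟩,⟨-2,0⟩,⟨-2,0⟩⟩, ⟨⟨-2,0⟩,⟨2,0⟩,⟨-2,0⟩,⟨2,0⟩⟩, ⟨⟨-2,0⟩,⟨2,0⟩,⟨2,0⟩,⟨-2,0⟩⟩,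 ⟨⟨-2,0⟩,⟨2,0⟩,⟨2,0⟩,⟨2,0⟩⟩, ⟨⟨-1,-1⟩,⟨-2,0⟩,⟨-1,1⟩,⟨0,0⟩⟩, ⟨⟨-1,-1⟩,⟨-2,0⟩,⟨1,-1⟩,⟨0,0⟩⟩, ⟨⟨-1,-1⟩,⟨-1,1⟩,⟨0,0⟩,⟨-2,0⟩⟩, ⟨⟨-1,-1⟩,⟨-1,1⟩,⟨0,0⟩,⟨2,0⟩⟩, ⟨⟨-1,-1⟩,⟨0,0⟩,⟨-2,0⟩,⟨-1,1⟩⟩, ⟨⟨-1,-1⟩,⟨0,0⟩,⟨-2,0⟩,⟨1,-1⟩⟩, ⟨⟨-1,-1⟩,⟨0,0⟩,⟨2,0⟩,⟨-1,1⟩⟩, ⟨⟨-1,-1⟩,⟨0,0⟩,⟨2,0⟩,⟨1,-1⟩⟩, ⟨⟨-1,-1⟩,⟨1,-1⟩,⟨0,0⟩,⟨-2,0⟩⟩, ⟨⟨-1,-1⟩,⟨1,-1⟩,⟨0,0⟩,⟨2,0⟩⟩, ⟨⟨-1,-1⟩,⟨2,0⟩,⟨-1,1⟩,⟨0,0⟩⟩,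 ⟨⟨-1,-1⟩,⟨2,0⟩,⟨1,-1⟩,⟨0,0⟩⟩, ⟨⟨-1,1⟩,⟨-2,0⟩,⟨0,0⟩,⟨-1,-1⟩⟩, ⟨⟨-1,1⟩,⟨-2,0⟩,⟨0,0⟩,⟨1,1⟩⟩, ⟨⟨-1,1⟩,⟨-1,-1⟩,⟨-2,0⟩,⟨0,0⟩⟩, ⟨⟨-1,1⟩,⟨-1,-1⟩,⟨2,0⟩,⟨0,0⟩⟩, ⟨⟨-1,1⟩,⟨0,0⟩,⟨-1,-1⟩,⟨-2,0⟩⟩, ⟨⟨-1,1⟩,⟨0,0⟩,⟨-1,-1⟩,⟨2,0⟩⟩, ⟨⟨-1,1⟩,⟨0,0⟩,⟨1,1⟩,⟨-2,0⟩⟩, ⟨⟨-1,1⟩,⟨0,0⟩,⟨1,1⟩,⟨2,0⟩⟩, ⟨⟨-1,1⟩,⟨1,1⟩,⟨-2,0⟩,⟨0,0⟩⟩, ⟨⟨-1,1⟩,⟨1,1⟩,⟨2,0⟩,⟨0,0⟩⟩, ⟨⟨-1,1⟩,⟨2,0⟩,⟨0,0⟩,⟨-1,-1⟩⟩, ⟨⟨-1,1⟩,⟨2,0⟩,⟨0,0⟩,⟨1,1⟩⟩,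 ⟨⟨0,0⟩,⟨-4,0⟩,⟨0,0⟩,⟨0,0⟩⟩, ⟨⟨0,0⟩,⟨-2,0⟩,⟨-1,-1⟩,⟨-1,1⟩⟩, ⟨⟨0,0⟩,⟨-2,0⟩,⟨-1,-1⟩,⟨1,-1⟩⟩, ⟨⟨0,0⟩,⟨-2,0⟩,⟨1,1⟩,⟨-1,1⟩⟩, ⟨⟨0,0⟩,⟨-2,0⟩,⟨1,1⟩,⟨1,-1⟩⟩, ⟨⟨0,0⟩,⟨-1,-1⟩,⟨-1,1⟩,⟨-2,0⟩⟩, ⟨⟨0,0⟩,⟨-1,-1⟩,⟨-1,1⟩,⟨2,0⟩⟩, ⟨⟨0,0⟩,⟨-1,-1⟩,⟨1,-1⟩,⟨-2,0⟩⟩, ⟨⟨0,0⟩,⟨-1,-1⟩,⟨1,-1⟩,⟨2,0⟩⟩, ⟨⟨0,0⟩,⟨-1,1⟩,⟨-2,0⟩,⟨-1,-1⟩⟩, ⟨⟨0,0⟩,⟨-1,1⟩,⟨-2,0⟩,⟨1,1⟩⟩, ⟨⟨0,0⟩,⟨-1,1⟩,⟨2,0⟩,⟨-1,-1⟩⟩,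 ⟨⟨0,0⟩,⟨-1,1⟩,⟨2,0⟩,⟨1,1⟩⟩, ⟨⟨0,0⟩,⟨0,0⟩,⟨-4,0⟩,⟨0,0⟩⟩, ⟨⟨0,0⟩,⟨0,0⟩,⟨0,0⟩,⟨-4,0⟩⟩, ⟨⟨0,0⟩,⟨0,0⟩,⟨0,0⟩,⟨4,0⟩⟩, ⟨⟨0,0⟩,⟨0,0⟩,⟨4,0⟩,⟨0,0⟩⟩, ⟨⟨0,0⟩,⟨1,-1⟩,⟨-2,0⟩,⟨-1,-1⟩⟩, ⟨⟨0,0⟩,⟨1,-1⟩,⟨-2,0⟩,⟨1,1⟩⟩, ⟨⟨0,0⟩,⟨1,-1⟩,⟨2,0⟩,⟨-1,-1⟩⟩, ⟨⟨0,0⟩,⟨1,-1⟩,⟨2,0⟩,⟨1,1⟩⟩, ⟨⟨0,0⟩,⟨1,1⟩,⟨-1,1⟩,⟨-2,0⟩⟩, ⟨⟨0,0⟩,⟨1,1⟩,⟨-1,1⟩,⟨2,0⟩⟩, ⟨⟨0,0⟩,⟨1,1⟩,⟨1,-1⟩,⟨-2,0⟩⟩, ⟨⟨0,0⟩,⟨1,1⟩,⟨1,-1⟩,⟨2,0⟩⟩,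 ⟨⟨0,0⟩,⟨2,0⟩,⟨-1,-1⟩,⟨-1,1⟩⟩, ⟨⟨0,0⟩,⟨2,0⟩,⟨-1,-1⟩,⟨1,-1⟩⟩, ⟨⟨0,0⟩,⟨2,0⟩,⟨1,1⟩,⟨-1,1⟩⟩, ⟨⟨0,0⟩,⟨2,0⟩,⟨1,1⟩,⟨1,-1⟩⟩, ⟨⟨0,0⟩,⟨4,0⟩,⟨0,0⟩,⟨0,0⟩⟩, ⟨⟨1,-1⟩,⟨-2,0⟩,⟨0,0⟩,⟨-1,-1⟩⟩, ⟨⟨1,-1⟩,⟨-2,0⟩,⟨0,0⟩,⟨1,1⟩⟩, ⟨⟨1,-1⟩,⟨-1,-1⟩,⟨-2,0⟩,⟨0,0⟩⟩, ⟨⟨1,-1⟩,⟨-1,-1⟩,⟨2,0⟩,⟨0,0⟩⟩, ⟨⟨1,-1⟩,⟨0,0⟩,⟨-1,-1⟩,⟨-2,0⟩⟩, ⟨⟨1,-1⟩,⟨0,0⟩,⟨-1,-1⟩,⟨2,0⟩⟩, ⟨⟨1,-1⟩,⟨0,0⟩,⟨1,1⟩,⟨-2,0⟩⟩, ⟨⟨1,-1⟩,⟨0,0⟩,⟨1,1⟩,⟨2,0⟩⟩,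 ⟨⟨1,-1⟩,⟨1,1⟩,⟨-2,0⟩,⟨0,0⟩⟩, ⟨⟨1,-1⟩,⟨1,1⟩,⟨2,0⟩,⟨0,0⟩⟩, ⟨⟨1,-1⟩,⟨2,0⟩,⟨0,0⟩,⟨-1,-1⟩⟩, ⟨⟨1,-1⟩,⟨2,0⟩,⟨0,0⟩,⟨1,1⟩⟩, ⟨⟨1,1⟩,⟨-2,0⟩,⟨-1,1⟩,⟨0,0⟩⟩, ⟨⟨1,1⟩,⟨-2,0⟩,⟨1,-1⟩,⟨0,0⟩⟩, ⟨⟨1,1⟩,⟨-1,1⟩,⟨0,0⟩,⟨-2,0⟩⟩, ⟨⟨1,1⟩,⟨-1,1⟩,⟨0,0⟩,⟨2,0⟩⟩, ⟨⟨1,1⟩,⟨0,0⟩,⟨-2,0⟩,⟨-1,1⟩⟩, ⟨⟨1,1⟩,⟨0,0⟩,⟨-2,0⟩,⟨1,-1⟩⟩, ⟨⟨1,1⟩,⟨0,0⟩,⟨2,0⟩,⟨-1,1⟩⟩, ⟨⟨1,1⟩,⟨0,0⟩,⟨2,0⟩,⟨1,-1⟩⟩, ⟨⟨1,1⟩,⟨1,-1⟩,⟨0,0⟩,⟨-2,0⟩⟩,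 ⟨⟨1,1⟩,⟨1,-1⟩,⟨0,0⟩,⟨2,0⟩⟩, ⟨⟨1,1⟩,⟨2,0⟩,⟨-1,1⟩,⟨0,0⟩⟩, ⟨⟨1,1⟩,⟨2,0⟩,⟨1,-1⟩,⟨0,0⟩⟩, ⟨⟨2,0⟩,⟨-2,0⟩,⟨-2,0⟩,⟨-2,0⟩⟩, ⟨⟨2,0⟩,⟨-2,0⟩,⟨-2,0⟩,⟨2,0⟩⟩, ⟨⟨2,0⟩,⟨-2,0⟩,⟨2,0⟩,⟨-2,0⟩⟩, ⟨⟨2,0⟩,⟨-2,0⟩,⟨2,0⟩,⟨2,0⟩⟩, ⟨⟨2,0⟩,⟨-1,-1⟩,⟨0,0⟩,⟨-1,1⟩⟩, ⟨⟨2,0⟩,⟨-1,-1⟩,⟨0,0⟩,⟨1,-1⟩⟩, ⟨⟨2,0⟩,⟨-1,1⟩,⟨-1,-1⟩,⟨0,0⟩⟩, ⟨⟨2,0⟩,⟨-1,1⟩,⟨1,1⟩,⟨0,0⟩⟩, ⟨⟨2,0⟩,⟨0,0⟩,⟨-1,1⟩,⟨-1,-1⟩⟩, ⟨⟨2,0⟩,⟨0,0⟩,⟨-1,1⟩,⟨1,1⟩⟩,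 ⟨⟨2,0⟩,⟨0,0⟩,⟨1,-1⟩,⟨-1,-1⟩⟩, ⟨⟨2,0⟩,⟨0,0⟩,⟨1,-1⟩,⟨1,1⟩⟩, ⟨⟨2,0⟩,⟨1,-1⟩,⟨-1,-1⟩,⟨0,0⟩⟩, ⟨⟨2,0⟩,⟨1,-1⟩,⟨1,1⟩,⟨0,0⟩⟩, ⟨⟨2,0⟩,⟨1,1⟩,⟨0,0⟩,⟨-1,1⟩⟩, ⟨⟨2,0⟩,⟨1,1⟩,⟨0,0⟩,⟨1,-1⟩⟩, ⟨⟨2,0⟩,⟨2,0⟩,⟨-2,0⟩,⟨-2,0⟩⟩, ⟨⟨2,0⟩,⟨2,0⟩,⟨-2,0⟩,⟨2,0⟩⟩, ⟨⟨2,0⟩,⟨2,0⟩,⟨2,0⟩,⟨-2,0⟩⟩, ⟨⟨2,0⟩,⟨2,0⟩,⟨2,0⟩,⟨2,0⟩⟩, ⟨⟨4,0⟩,⟨0,0⟩,⟨0,0⟩,⟨0,0⟩⟩}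

lemma mem_insert_mk {a b c d : ℤ√5} {x : QZ5} {s : Finset QZ5} :
    x ∈ @insert QZ5 (Finset QZ5) _ ⟨a, b, c, d⟩ s ↔ x = ⟨a, b, c, d⟩ ∨ x ∈ s :=
  Finset.mem_insert
lemma mem_singleton_mk {a b c d : ℤ√5} {x : QZ5} :
    x ∈ @singleton QZ5 (Finset QZ5) _ ⟨a, b, c, d⟩ ↔ x = ⟨a, b, c, d⟩ :=
  Finset.mem_singleton

def d4 (a : QZ5) : QZ5 :=
  ⟨⟨a.re.re/4, a.re.im/4⟩, ⟨a.imI.re/4, a.imI.im/4⟩,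
   ⟨a.imJ.re/4, a.imJ.im/4⟩, ⟨a.imK.re/4, a.imK.im/4⟩⟩

def st (a : QZ5) : QZ5 := ⟨a.re, -a.imI, -a.imJ, -a.imK⟩

def a1 : QZ5 := ⟨⟨-2,0⟩,⟨-2,0⟩,⟨-2,0⟩,⟨-2,0⟩⟩
def a2 : QZ5 := ⟨⟨-2,0⟩,⟨-1,-1⟩,⟨0,0⟩,⟨1,-1⟩⟩
def gset : Finset QZ5 := {a1, a2, st a1, st a2}

lemma pmz_cast {n : ℤ} (hn : n ∈ pmz) : ((n:ℝ)) ∈ pm := by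
  fin_cases hn
  · exact Or.inl (by norm_num)
  · exact Or.inr (by norm_num)

lemma pm_cases {ε : ℝ} (h : ε ∈ pm) : ∃ n : ℤ, n ∈ pmz ∧ ε = (n:ℝ) := by
  rcases h with h | h
  · exact ⟨1, by decide, by rw [h]; norm_num⟩
  · exact ⟨-1, by decide, by rw [h]; norm_num⟩

lemma mem_R0i {x : QZ5} (hx : x ∈ R0i) : x ∈ Rhat := by
  simp only [Rhat, Finset.mem_union]; tauto
lemma mem_R0j {x : QZ5} (hx : x ∈ R0j) : x ∈ Rhat := by
  simp only [Rhat, Finset.mem_union]; tauto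
lemma mem_R0k {x : QZ5} (hx : x ∈ R0k) : x ∈ Rhat := by
  simp only [Rhat, Finset.mem_union]; tauto
lemma mem_R1 {x : QZ5} (hx : x ∈ R1) : x ∈ Rhat := by
  simp only [Rhat, Finset.mem_union]; tauto
lemma mem_R2 {x : QZ5} (hx : x ∈ R2) : x ∈ Rhat := by
  simp only [Rhat, Finset.mem_union]; tauto
lemma mem_R3 {x : QZ5} (hx : x ∈ R3) : x ∈ Rhat := by
  simp only [Rhat, Finset.mem_union]; tauto

lemma tripmem {n₁ n₂ n₃ : ℤ} (h₁ : n₁ ∈ pmz) (h₂ : n₂ ∈ pmz) (h₃ : n₃ ∈ pmz) :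
    (n₁, n₂, n₃) ∈ pmz ×ˢ pmz ×ˢ pmz := by
  simp only [Finset.mem_product]; exact ⟨h₁, h₂, h₃⟩

/-- Every root of `H₃` is the image of an element of `Rhat`. -/
lemma L1 : ∀ p ∈ rootsH3, ∃ a ∈ Rhat, p = fq a := by
  rintro p (⟨ε, hε, hp | hp | hp⟩ | ⟨ε₁, h₁, ε₂, h₂, ε₃, h₃, hp | hp | hp⟩)
  · obtain ⟨n, hn, rfl⟩ := pm_cases hε
    exact ⟨_, mem_R0i (Finset.mem_image.2 ⟨n, hn, rfl⟩), by rw [hp, br_i]⟩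
  · obtain ⟨n, hn, rfl⟩ := pm_cases hε
    exact ⟨_, mem_R0j (Finset.mem_image.2 ⟨n, hn, rfl⟩), by rw [hp, br_j]⟩
  · obtain ⟨n, hn, rfl⟩ := pm_cases hε
    exact ⟨_, mem_R0k (Finset.mem_image.2 ⟨n, hn, rfl⟩), by rw [hp, br_k]⟩
  · obtain ⟨n₁, hn₁, rfl⟩ := pm_cases h₁
    obtain ⟨n₂, hn₂, rfl⟩ := pm_cases h₂
    obtain ⟨n₃, hn₃, rfl⟩ := pm_cases h₃
    exact ⟨_, mem_R1 (Finset.mem_image.2 ⟨(n₁, n₂, n₃), tripmem hn₁ hn₂ hn₃, rfl⟩),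
      by rw [hp, br1]⟩
  · obtain ⟨n₁, hn₁, rfl⟩ := pm_cases h₁
    obtain ⟨n₂, hn₂, rfl⟩ := pm_cases h₂
    obtain ⟨n₃, hn₃, rfl⟩ := pm_cases h₃
    exact ⟨_, mem_R2 (Finset.mem_image.2 ⟨(n₁, n₂, n₃), tripmem hn₁ hn₂ hn₃, rfl⟩),
      by rw [hp, br2]⟩
  · obtain ⟨n₁, hn₁, rfl⟩ := pm_cases h₁
    obtain ⟨n₂, hn₂, rfl⟩ := pm_cases h₂
    obtain ⟨n₃, hn₃, rfl⟩ := pm_cases h₃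
    exact ⟨_, mem_R3 (Finset.mem_image.2 ⟨(n₁, n₂, n₃), tripmem hn₁ hn₂ hn₃, rfl⟩),
      by rw [hp, br3]⟩

/-- Every element of `Rhat` maps to a root of `H₃`. -/
lemma L2 : ∀ a ∈ Rhat, fq a ∈ rootsH3 := by
  intro a ha
  simp only [Rhat, Finset.mem_union] at ha
  rcases ha with ((((h | h) | h) | h) | h) | h
  · obtain ⟨n, hn, rfl⟩ := Finset.mem_image.1 h
    exact Or.inl ⟨(n:ℝ), pmz_cast hn, Or.inl (br_i n)⟩
  · obtain ⟨n, hn, rfl⟩ := Finset.mem_image.1 h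
    exact Or.inl ⟨(n:ℝ), pmz_cast hn, Or.inr (Or.inl (br_j n))⟩
  · obtain ⟨n, hn, rfl⟩ := Finset.mem_image.1 h
    exact Or.inl ⟨(n:ℝ), pmz_cast hn, Or.inr (Or.inr (br_k n))⟩
  · obtain ⟨⟨n₁, n₂, n₃⟩, hn, rfl⟩ := Finset.mem_image.1 h
    simp only [Finset.mem_product] at hn
    exact Or.inr ⟨(n₁:ℝ), pmz_cast hn.1, (n₂:ℝ), pmz_cast hn.2.1, (n₃:ℝ), pmz_cast hn.2.2,
      Or.inl (br1 n₁ n₂ n₃)⟩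
  · obtain ⟨⟨n₁, n₂, n₃⟩, hn, rfl⟩ := Finset.mem_image.1 h
    simp only [Finset.mem_product] at hn
    exact Or.inr ⟨(n₁:ℝ), pmz_cast hn.1, (n₂:ℝ), pmz_cast hn.2.1, (n₃:ℝ), pmz_cast hn.2.2,
      Or.inr (Or.inl (br2 n₁ n₂ n₃))⟩
  · obtain ⟨⟨n₁, n₂, n₃⟩, hn, rfl⟩ := Finset.mem_image.1 h
    simp only [Finset.mem_product] at hn
    exact Or.inr ⟨(n₁:ℝ), pmz_cast hn.1, (n₂:ℝ), pmz_cast hn.2.1, (n₃:ℝ), pmz_cast hn.2.2,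
      Or.inr (Or.inr (br3 n₁ n₂ n₃))⟩

-- the decidable computations
set_option maxRecDepth 100000 in
set_option maxHeartbeats 4000000 in
lemma C2u1a : a1 * st a1 = 4 * q4one := by decide
lemma C2u1b : st a1 * a1 = 4 * q4one := by decide
lemma C2u2a : a2 * st a2 = 4 * q4one := by decide
lemma C2u2b : st a2 * a2 = 4 * q4one := by decide

set_option maxRecDepth 1000000 in
set_option maxHeartbeats 16000000 in
lemma D1 : ∀ g ∈ gset, ∀ a ∈ Shat, g * a = 4 * d4 (g * a) ∧ d4 (g * a) ∈ Shat := by decide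

set_option maxRecDepth 1000000 in
set_option maxHeartbeats 32000000 in
lemma C3 : ∀ a ∈ Rhat, ∀ b ∈ Rhat, a * b = 4 * d4 (a * b) ∧ d4 (a * b) ∈ Shat := by decide

-- the two generating units
def u1 : (Quaternion ℝ)ˣ :=
  ⟨fq a1, fq (st a1), by rw [fq_mul _ _ _ C2u1a, fq_one], by rw [fq_mul _ _ _ C2u1b, fq_one]⟩
def u2 : (Quaternion ℝ)ˣ :=
  ⟨fq a2, fq (st a2), by rw [fq_mul _ _ _ C2u2a, fq_one], by rw [fq_mul _ _ _ C2u2b, fq_one]⟩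

def G2 : Subgroup (Quaternion ℝ)ˣ := Subgroup.closure {u1, u2}

lemma hu1 : u1 ∈ G2 := Subgroup.subset_closure (Or.inl rfl)
lemma hu2 : u2 ∈ G2 := Subgroup.subset_closure (Or.inr rfl)

def RS (x : QZ5) : Prop := ∃ u ∈ G2, (u : Quaternion ℝ) = fq x

lemma RS_one : RS q4one := ⟨1, one_mem _, fq_one.symm⟩

lemma RS_step1 {x y : QZ5} (h : a1 * x = 4 * y) (hx : RS x) : RS y := by
  obtain ⟨u, hu, hux⟩ := hx
  exact ⟨u1 * u, mul_mem hu1 hu,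
    by rw [Units.val_mul, hux]; exact fq_mul _ _ _ h⟩

lemma RS_step2 {x y : QZ5} (h : a2 * x = 4 * y) (hx : RS x) : RS y := by
  obtain ⟨u, hu, hux⟩ := hx
  exact ⟨u2 * u, mul_mem hu2 hu,
    by rw [Units.val_mul, hux]; exact fq_mul _ _ _ h⟩

set_option maxRecDepth 100000 in
set_option maxHeartbeats 8000000 in
lemma memS : ∀ x ∈ Shat, RS x := by
  have hS119 : RS (⟨⟨4,0⟩,⟨0,0⟩,⟨0,0⟩,⟨0,0⟩⟩ : QZ5) := RS_one
  have hS1 : RS (⟨⟨-2,0⟩,⟨-2,0⟩,⟨-2,0⟩,⟨-2,0⟩⟩ : QZ5) := RS_step1 (by decide) hS119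
  have hS6 : RS (⟨⟨-2,0⟩,⟨-1,-1⟩,⟨0,0⟩,⟨1,-1⟩⟩ : QZ5) := RS_step2 (by decide) hS119
  have hS84 : RS (⟨⟨1,-1⟩,⟨1,1⟩,⟨2,0⟩,⟨0,0⟩⟩ : QZ5) := RS_step1 (by decide) hS6
  have hS15 : RS (⟨⟨-2,0⟩,⟨1,1⟩,⟨0,0⟩,⟨-1,1⟩⟩ : QZ5) := RS_step2 (by decide) hS6
  have hS96 : RS (⟨⟨1,1⟩,⟨1,-1⟩,⟨0,0⟩,⟨2,0⟩⟩ : QZ5) := RS_step1 (by decide) hS15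
  have hS75 : RS (⟨⟨1,-1⟩,⟨-2,0⟩,⟨0,0⟩,⟨-1,-1⟩⟩ : QZ5) := RS_step1 (by decide) hS96
  have hS3 : RS (⟨⟨-2,0⟩,⟨-2,0⟩,⟨2,0⟩,⟨-2,0⟩⟩ : QZ5) := RS_step2 (by decide) hS96
  have hS74 : RS (⟨⟨0,0⟩,⟨4,0⟩,⟨0,0⟩,⟨0,0⟩⟩ : QZ5) := RS_step1 (by decide) hS3
  have hS83 : RS (⟨⟨1,-1⟩,⟨1,1⟩,⟨-2,0⟩,⟨0,0⟩⟩ : QZ5) := RS_step2 (by decide) hS3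
  have hS34 : RS (⟨⟨-1,1⟩,⟨-2,0⟩,⟨0,0⟩,⟨1,1⟩⟩ : QZ5) := RS_step1 (by decide) hS83
  have hS64 : RS (⟨⟨0,0⟩,⟨1,-1⟩,⟨2,0⟩,⟨-1,-1⟩⟩ : QZ5) := RS_step1 (by decide) hS34
  have hS81 : RS (⟨⟨1,-1⟩,⟨0,0⟩,⟨1,1⟩,⟨-2,0⟩⟩ : QZ5) := RS_step2 (by decide) hS34
  have hS41 : RS (⟨⟨-1,1⟩,⟨1,1⟩,⟨-2,0⟩,⟨0,0⟩⟩ : QZ5) := RS_step1 (by decide) hS81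
  have hS71 : RS (⟨⟨0,0⟩,⟨2,0⟩,⟨-1,-1⟩,⟨1,-1⟩⟩ : QZ5) := RS_step2 (by decide) hS81
  have hS76 : RS (⟨⟨1,-1⟩,⟨-2,0⟩,⟨0,0⟩,⟨1,1⟩⟩ : QZ5) := RS_step1 (by decide) hS71
  have hS39 : RS (⟨⟨-1,1⟩,⟨0,0⟩,⟨1,1⟩,⟨-2,0⟩⟩ : QZ5) := RS_step1 (by decide) hS76
  have hS73 : RS (⟨⟨0,0⟩,⟨2,0⟩,⟨1,1⟩,⟨1,-1⟩⟩ : QZ5) := RS_step2 (by decide) hS76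
  have hS105 : RS (⟨⟨2,0⟩,⟨-1,1⟩,⟨-1,-1⟩,⟨0,0⟩⟩ : QZ5) := RS_step1 (by decide) hS73
  have hS37 : RS (⟨⟨-1,1⟩,⟨0,0⟩,⟨-1,-1⟩,⟨-2,0⟩⟩ : QZ5) := RS_step2 (by decide) hS73
  have hS30 : RS (⟨⟨-1,-1⟩,⟨1,-1⟩,⟨0,0⟩,⟨2,0⟩⟩ : QZ5) := RS_step1 (by decide) hS37
  have hS106 : RS (⟨⟨2,0⟩,⟨-1,1⟩,⟨1,1⟩,⟨0,0⟩⟩ : QZ5) := RS_step1 (by decide) hS30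
  have hS42 : RS (⟨⟨-1,1⟩,⟨1,1⟩,⟨2,0⟩,⟨0,0⟩⟩ : QZ5) := RS_step2 (by decide) hS30
  have hS111 : RS (⟨⟨2,0⟩,⟨1,-1⟩,⟨-1,-1⟩,⟨0,0⟩⟩ : QZ5) := RS_step1 (by decide) hS42
  have hS99 : RS (⟨⟨2,0⟩,⟨-2,0⟩,⟨-2,0⟩,⟨-2,0⟩⟩ : QZ5) := RS_step2 (by decide) hS42
  have hS0 : RS (⟨⟨-4,0⟩,⟨0,0⟩,⟨0,0⟩,⟨0,0⟩⟩ : QZ5) := RS_step1 (by decide) hS99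
  have hS118 : RS (⟨⟨2,0⟩,⟨2,0⟩,⟨2,0⟩,⟨2,0⟩⟩ : QZ5) := RS_step1 (by decide) hS0
  have hS113 : RS (⟨⟨2,0⟩,⟨1,1⟩,⟨0,0⟩,⟨-1,1⟩⟩ : QZ5) := RS_step2 (by decide) hS0
  have hS35 : RS (⟨⟨-1,1⟩,⟨-1,-1⟩,⟨-2,0⟩,⟨0,0⟩⟩ : QZ5) := RS_step1 (by decide) hS113
  have hS104 : RS (⟨⟨2,0⟩,⟨-1,-1⟩,⟨0,0⟩,⟨1,-1⟩⟩ : QZ5) := RS_step2 (by decide) hS113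
  have hS23 : RS (⟨⟨-1,-1⟩,⟨-1,1⟩,⟨0,0⟩,⟨-2,0⟩⟩ : QZ5) := RS_step1 (by decide) hS104
  have hS44 : RS (⟨⟨-1,1⟩,⟨2,0⟩,⟨0,0⟩,⟨1,1⟩⟩ : QZ5) := RS_step1 (by decide) hS23
  have hS116 : RS (⟨⟨2,0⟩,⟨2,0⟩,⟨-2,0⟩,⟨2,0⟩⟩ : QZ5) := RS_step2 (by decide) hS23
  have hS45 : RS (⟨⟨0,0⟩,⟨-4,0⟩,⟨0,0⟩,⟨0,0⟩⟩ : QZ5) := RS_step1 (by decide) hS116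
  have hS36 : RS (⟨⟨-1,1⟩,⟨-1,-1⟩,⟨2,0⟩,⟨0,0⟩⟩ : QZ5) := RS_step2 (by decide) hS116
  have hS85 : RS (⟨⟨1,-1⟩,⟨2,0⟩,⟨0,0⟩,⟨-1,-1⟩⟩ : QZ5) := RS_step1 (by decide) hS36
  have hS55 : RS (⟨⟨0,0⟩,⟨-1,1⟩,⟨-2,0⟩,⟨1,1⟩⟩ : QZ5) := RS_step1 (by decide) hS85
  have hS38 : RS (⟨⟨-1,1⟩,⟨0,0⟩,⟨-1,-1⟩,⟨2,0⟩⟩ : QZ5) := RS_step2 (by decide) hS85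
  have hS78 : RS (⟨⟨1,-1⟩,⟨-1,-1⟩,⟨2,0⟩,⟨0,0⟩⟩ : QZ5) := RS_step1 (by decide) hS38
  have hS48 : RS (⟨⟨0,0⟩,⟨-2,0⟩,⟨1,1⟩,⟨-1,1⟩⟩ : QZ5) := RS_step2 (by decide) hS38
  have hS43 : RS (⟨⟨-1,1⟩,⟨2,0⟩,⟨0,0⟩,⟨-1,-1⟩⟩ : QZ5) := RS_step1 (by decide) hS48
  have hS80 : RS (⟨⟨1,-1⟩,⟨0,0⟩,⟨-1,-1⟩,⟨2,0⟩⟩ : QZ5) := RS_step1 (by decide) hS43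
  have hS46 : RS (⟨⟨0,0⟩,⟨-2,0⟩,⟨-1,-1⟩,⟨-1,1⟩⟩ : QZ5) := RS_step2 (by decide) hS43
  have hS14 : RS (⟨⟨-2,0⟩,⟨1,-1⟩,⟨1,1⟩,⟨0,0⟩⟩ : QZ5) := RS_step1 (by decide) hS46
  have hS82 : RS (⟨⟨1,-1⟩,⟨0,0⟩,⟨1,1⟩,⟨2,0⟩⟩ : QZ5) := RS_step2 (by decide) hS46
  have hS89 : RS (⟨⟨1,1⟩,⟨-1,1⟩,⟨0,0⟩,⟨-2,0⟩⟩ : QZ5) := RS_step1 (by decide) hS82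
  have hS13 : RS (⟨⟨-2,0⟩,⟨1,-1⟩,⟨-1,-1⟩,⟨0,0⟩⟩ : QZ5) := RS_step1 (by decide) hS89
  have hS77 : RS (⟨⟨1,-1⟩,⟨-1,-1⟩,⟨-2,0⟩,⟨0,0⟩⟩ : QZ5) := RS_step2 (by decide) hS89
  have hS8 : RS (⟨⟨-2,0⟩,⟨-1,1⟩,⟨1,1⟩,⟨0,0⟩⟩ : QZ5) := RS_step1 (by decide) hS77
  have hS20 : RS (⟨⟨-2,0⟩,⟨2,0⟩,⟨2,0⟩,⟨2,0⟩⟩ : QZ5) := RS_step2 (by decide) hS77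
  have hS98 : RS (⟨⟨1,1⟩,⟨2,0⟩,⟨1,-1⟩,⟨0,0⟩⟩ : QZ5) := RS_step1 (by decide) hS8
  have hS115 : RS (⟨⟨2,0⟩,⟨2,0⟩,⟨-2,0⟩,⟨-2,0⟩⟩ : QZ5) := RS_step2 (by decide) hS8
  have hS2 : RS (⟨⟨-2,0⟩,⟨-2,0⟩,⟨-2,0⟩,⟨2,0⟩⟩ : QZ5) := RS_step1 (by decide) hS115
  have hS53 : RS (⟨⟨0,0⟩,⟨-1,-1⟩,⟨1,-1⟩,⟨2,0⟩⟩ : QZ5) := RS_step2 (by decide) hS115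
  have hS61 : RS (⟨⟨0,0⟩,⟨0,0⟩,⟨4,0⟩,⟨0,0⟩⟩ : QZ5) := RS_step1 (by decide) hS2
  have hS72 : RS (⟨⟨0,0⟩,⟨2,0⟩,⟨1,1⟩,⟨-1,1⟩⟩ : QZ5) := RS_step2 (by decide) hS2
  have hS92 : RS (⟨⟨1,1⟩,⟨0,0⟩,⟨-2,0⟩,⟨1,-1⟩⟩ : QZ5) := RS_step1 (by decide) hS72
  have hS109 : RS (⟨⟨2,0⟩,⟨0,0⟩,⟨1,-1⟩,⟨-1,-1⟩⟩ : QZ5) := RS_step2 (by decide) hS72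
  have hS25 : RS (⟨⟨-1,-1⟩,⟨0,0⟩,⟨-2,0⟩,⟨-1,1⟩⟩ : QZ5) := RS_step1 (by decide) hS109
  have hS5 : RS (⟨⟨-2,0⟩,⟨-1,-1⟩,⟨0,0⟩,⟨-1,1⟩⟩ : QZ5) := RS_step2 (by decide) hS92
  have hS40 : RS (⟨⟨-1,1⟩,⟨0,0⟩,⟨1,1⟩,⟨2,0⟩⟩ : QZ5) := RS_step1 (by decide) hS25
  have hS59 : RS (⟨⟨0,0⟩,⟨0,0⟩,⟨0,0⟩,⟨-4,0⟩⟩ : QZ5) := RS_step2 (by decide) hS40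
  have hS18 : RS (⟨⟨-2,0⟩,⟨2,0⟩,⟨-2,0⟩,⟨2,0⟩⟩ : QZ5) := RS_step1 (by decide) hS59
  have hS102 : RS (⟨⟨2,0⟩,⟨-2,0⟩,⟨2,0⟩,⟨2,0⟩⟩ : QZ5) := RS_step1 (by decide) hS18
  have hS93 : RS (⟨⟨1,1⟩,⟨0,0⟩,⟨2,0⟩,⟨-1,1⟩⟩ : QZ5) := RS_step2 (by decide) hS18
  have hS62 : RS (⟨⟨0,0⟩,⟨1,-1⟩,⟨-2,0⟩,⟨-1,-1⟩⟩ : QZ5) := RS_step1 (by decide) hS93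
  have hS24 : RS (⟨⟨-1,-1⟩,⟨-1,1⟩,⟨0,0⟩,⟨2,0⟩⟩ : QZ5) := RS_step1 (by decide) hS62
  have hS12 : RS (⟨⟨-2,0⟩,⟨0,0⟩,⟨1,-1⟩,⟨1,1⟩⟩ : QZ5) := RS_step2 (by decide) hS62
  have hS112 : RS (⟨⟨2,0⟩,⟨1,-1⟩,⟨1,1⟩,⟨0,0⟩⟩ : QZ5) := RS_step1 (by decide) hS12
  have hS54 : RS (⟨⟨0,0⟩,⟨-1,1⟩,⟨-2,0⟩,⟨-1,-1⟩⟩ : QZ5) := RS_step1 (by decide) hS112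
  have hS11 : RS (⟨⟨-2,0⟩,⟨0,0⟩,⟨1,-1⟩,⟨-1,-1⟩⟩ : QZ5) := RS_step2 (by decide) hS112
  have hS86 : RS (⟨⟨1,-1⟩,⟨2,0⟩,⟨0,0⟩,⟨1,1⟩⟩ : QZ5) := RS_step1 (by decide) hS11
  have hS87 : RS (⟨⟨1,1⟩,⟨-2,0⟩,⟨-1,1⟩,⟨0,0⟩⟩ : QZ5) := RS_step1 (by decide) hS86
  have hS94 : RS (⟨⟨1,1⟩,⟨0,0⟩,⟨2,0⟩,⟨1,-1⟩⟩ : QZ5) := RS_step2 (by decide) hS86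
  have hS79 : RS (⟨⟨1,-1⟩,⟨0,0⟩,⟨-1,-1⟩,⟨-2,0⟩⟩ : QZ5) := RS_step1 (by decide) hS94
  have hS10 : RS (⟨⟨-2,0⟩,⟨0,0⟩,⟨-1,1⟩,⟨1,1⟩⟩ : QZ5) := RS_step1 (by decide) hS79
  have hS60 : RS (⟨⟨0,0⟩,⟨0,0⟩,⟨0,0⟩,⟨4,0⟩⟩ : QZ5) := RS_step2 (by decide) hS79
  have hS101 : RS (⟨⟨2,0⟩,⟨-2,0⟩,⟨2,0⟩,⟨-2,0⟩⟩ : QZ5) := RS_step1 (by decide) hS60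
  have hS17 : RS (⟨⟨-2,0⟩,⟨2,0⟩,⟨-2,0⟩,⟨-2,0⟩⟩ : QZ5) := RS_step1 (by decide) hS101
  have hS26 : RS (⟨⟨-1,-1⟩,⟨0,0⟩,⟨-2,0⟩,⟨1,-1⟩⟩ : QZ5) := RS_step2 (by decide) hS101
  have hS57 : RS (⟨⟨0,0⟩,⟨-1,1⟩,⟨2,0⟩,⟨1,1⟩⟩ : QZ5) := RS_step1 (by decide) hS26
  have hS95 : RS (⟨⟨1,1⟩,⟨1,-1⟩,⟨0,0⟩,⟨-2,0⟩⟩ : QZ5) := RS_step1 (by decide) hS57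
  have hS107 : RS (⟨⟨2,0⟩,⟨0,0⟩,⟨-1,1⟩,⟨-1,-1⟩⟩ : QZ5) := RS_step2 (by decide) hS57
  have hS7 : RS (⟨⟨-2,0⟩,⟨-1,1⟩,⟨-1,-1⟩,⟨0,0⟩⟩ : QZ5) := RS_step1 (by decide) hS107
  have hS22 : RS (⟨⟨-1,-1⟩,⟨-2,0⟩,⟨1,-1⟩,⟨0,0⟩⟩ : QZ5) := RS_step2 (by decide) hS95
  have hS65 : RS (⟨⟨0,0⟩,⟨1,-1⟩,⟨2,0⟩,⟨1,1⟩⟩ : QZ5) := RS_step1 (by decide) hS7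
  have hS108 : RS (⟨⟨2,0⟩,⟨0,0⟩,⟨-1,1⟩,⟨1,1⟩⟩ : QZ5) := RS_step2 (by decide) hS7
  have hS67 : RS (⟨⟨0,0⟩,⟨1,1⟩,⟨-1,1⟩,⟨2,0⟩⟩ : QZ5) := RS_step2 (by decide) hS22
  have hS33 : RS (⟨⟨-1,1⟩,⟨-2,0⟩,⟨0,0⟩,⟨-1,-1⟩⟩ : QZ5) := RS_step1 (by decide) hS108
  have hS56 : RS (⟨⟨0,0⟩,⟨-1,1⟩,⟨2,0⟩,⟨-1,-1⟩⟩ : QZ5) := RS_step2 (by decide) hS65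
  have hS88 : RS (⟨⟨1,1⟩,⟨-2,0⟩,⟨1,-1⟩,⟨0,0⟩⟩ : QZ5) := RS_step1 (by decide) hS67
  have hS32 : RS (⟨⟨-1,-1⟩,⟨2,0⟩,⟨1,-1⟩,⟨0,0⟩⟩ : QZ5) := RS_step1 (by decide) hS33
  have hS70 : RS (⟨⟨0,0⟩,⟨2,0⟩,⟨-1,-1⟩,⟨-1,1⟩⟩ : QZ5) := RS_step1 (by decide) hS56
  have hS58 : RS (⟨⟨0,0⟩,⟨0,0⟩,⟨-4,0⟩,⟨0,0⟩⟩ : QZ5) := RS_step2 (by decide) hS56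
  have hS29 : RS (⟨⟨-1,-1⟩,⟨1,-1⟩,⟨0,0⟩,⟨-2,0⟩⟩ : QZ5) := RS_step1 (by decide) hS88
  have hS21 : RS (⟨⟨-1,-1⟩,⟨-2,0⟩,⟨-1,1⟩,⟨0,0⟩⟩ : QZ5) := RS_step2 (by decide) hS88
  have hS90 : RS (⟨⟨1,1⟩,⟨-1,1⟩,⟨0,0⟩,⟨2,0⟩⟩ : QZ5) := RS_step2 (by decide) hS32
  have hS4 : RS (⟨⟨-2,0⟩,⟨-2,0⟩,⟨2,0⟩,⟨2,0⟩⟩ : QZ5) := RS_step1 (by decide) hS58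
  have hS51 : RS (⟨⟨0,0⟩,⟨-1,-1⟩,⟨-1,1⟩,⟨2,0⟩⟩ : QZ5) := RS_step1 (by decide) hS70
  have hS69 : RS (⟨⟨0,0⟩,⟨1,1⟩,⟨1,-1⟩,⟨2,0⟩⟩ : QZ5) := RS_step2 (by decide) hS29
  have hS52 : RS (⟨⟨0,0⟩,⟨-1,-1⟩,⟨1,-1⟩,⟨-2,0⟩⟩ : QZ5) := RS_step1 (by decide) hS90
  have hS50 : RS (⟨⟨0,0⟩,⟨-1,-1⟩,⟨-1,1⟩,⟨-2,0⟩⟩ : QZ5) := RS_step2 (by decide) hS90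
  have hS117 : RS (⟨⟨2,0⟩,⟨2,0⟩,⟨2,0⟩,⟨-2,0⟩⟩ : QZ5) := RS_step1 (by decide) hS4
  have hS66 : RS (⟨⟨0,0⟩,⟨1,1⟩,⟨-1,1⟩,⟨-2,0⟩⟩ : QZ5) := RS_step2 (by decide) hS4
  have hS19 : RS (⟨⟨-2,0⟩,⟨2,0⟩,⟨2,0⟩,⟨-2,0⟩⟩ : QZ5) := RS_step2 (by decide) hS51
  have hS103 : RS (⟨⟨2,0⟩,⟨-1,-1⟩,⟨0,0⟩,⟨-1,1⟩⟩ : QZ5) := RS_step1 (by decide) hS69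
  have hS16 : RS (⟨⟨-2,0⟩,⟨1,1⟩,⟨0,0⟩,⟨1,-1⟩⟩ : QZ5) := RS_step1 (by decide) hS50
  have hS31 : RS (⟨⟨-1,-1⟩,⟨2,0⟩,⟨-1,1⟩,⟨0,0⟩⟩ : QZ5) := RS_step1 (by decide) hS52
  have hS47 : RS (⟨⟨0,0⟩,⟨-2,0⟩,⟨-1,-1⟩,⟨1,-1⟩⟩ : QZ5) := RS_step2 (by decide) hS117
  have hS9 : RS (⟨⟨-2,0⟩,⟨0,0⟩,⟨-1,1⟩,⟨-1,-1⟩⟩ : QZ5) := RS_step1 (by decide) hS103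
  have hS28 : RS (⟨⟨-1,-1⟩,⟨0,0⟩,⟨2,0⟩,⟨1,-1⟩⟩ : QZ5) := RS_step2 (by decide) hS103
  have hS110 : RS (⟨⟨2,0⟩,⟨0,0⟩,⟨1,-1⟩,⟨1,1⟩⟩ : QZ5) := RS_step1 (by decide) hS16
  have hS91 : RS (⟨⟨1,1⟩,⟨0,0⟩,⟨-2,0⟩,⟨-1,1⟩⟩ : QZ5) := RS_step2 (by decide) hS16
  have hS27 : RS (⟨⟨-1,-1⟩,⟨0,0⟩,⟨2,0⟩,⟨-1,1⟩⟩ : QZ5) := RS_step1 (by decide) hS47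
  have hS49 : RS (⟨⟨0,0⟩,⟨-2,0⟩,⟨1,1⟩,⟨1,-1⟩⟩ : QZ5) := RS_step2 (by decide) hS110
  have hS97 : RS (⟨⟨1,1⟩,⟨2,0⟩,⟨-1,1⟩,⟨0,0⟩⟩ : QZ5) := RS_step1 (by decide) hS27
  have hS114 : RS (⟨⟨2,0⟩,⟨1,1⟩,⟨0,0⟩,⟨1,-1⟩⟩ : QZ5) := RS_step2 (by decide) hS27
  have hS68 : RS (⟨⟨0,0⟩,⟨1,1⟩,⟨1,-1⟩,⟨-2,0⟩⟩ : QZ5) := RS_step1 (by decide) hS49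
  have hS63 : RS (⟨⟨0,0⟩,⟨1,-1⟩,⟨-2,0⟩,⟨1,1⟩⟩ : QZ5) := RS_step1 (by decide) hS68
  have hS100 : RS (⟨⟨2,0⟩,⟨-2,0⟩,⟨-2,0⟩,⟨2,0⟩⟩ : QZ5) := RS_step2 (by decide) hS68
  intro x hx
  simp only [Shat, mem_insert_mk, mem_singleton_mk] at hx
  obtain rfl|rfl|rfl|rfl|rfl|rfl|rfl|rfl|rfl|rfl|rfl|rfl|rfl|rfl|rfl|rfl|rfl|rfl|rfl|rfl|rfl|rfl|rfl|rfl|rfl|rfl|rfl|rfl|rfl|rfl|rfl|rfl|rfl|rfl|rfl|rfl|rfl|rfl|rfl|rfl|rfl|rfl|rfl|rfl|rfl|rfl|rfl|rfl|rfl|rfl|rfl|rfl|rfl|rfl|rfl|rfl|rfl|rfl|rfl|rfl|rfl|rfl|rfl|rfl|rfl|rfl|rfl|rfl|rfl|rfl|rfl|rfl|rfl|rfl|rfl|rfl|rfl|rfl|rfl|rfl|rfl|rfl|rfl|rfl|rfl|rfl|rfl|rfl|rfl|rfl|rfl|rfl|rfl|rfl|rfl|rfl|rfl|rfl|rfl|rfl|rfl|rfl|rfl|rfl|rfl|rfl|rfl|rfl|rfl|rfl|rfl|rfl|rfl|rfl|rfl|rfl|rfl|rfl|rfl|rfl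 := hx
  exacts [hS0, hS1, hS2, hS3, hS4, hS5, hS6, hS7, hS8, hS9, hS10, hS11, hS12, hS13, hS14, hS15, hS16, hS17, hS18, hS19, hS20, hS21, hS22, hS23, hS24, hS25, hS26, hS27, hS28, hS29, hS30, hS31, hS32, hS33, hS34, hS35, hS36, hS37, hS38, hS39, hS40, hS41, hS42, hS43, hS44, hS45, hS46, hS47, hS48, hS49, hS50, hS51, hS52, hS53, hS54, hS55, hS56, hS57, hS58, hS59, hS60, hS61, hS62, hS63, hS64, hS65, hS66, hS67, hS68, hS69, hS70, hS71, hS72, hS73, hS74, hS75, hS76, hS77, hS78, hS79, hS80, hS81, hS82, hS83, hS84, hS85, hS86, hS87, hS88, hS89, hS90, hS91, hS92, hS93, hS94, hS95, hS96, hS97, hS98, hS99, hS100, hS101, hS102, hS103, hS104, hS105, hS106, hS107, hS108, hS109, hS110, hS111, hS112, hS113, hS114, hS115, hS116, hS117, hS118, hS119]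

lemma hq4S : q4one ∈ Shat := by decide
lemma ha1g : a1 ∈ gset := by decide
lemma ha2g : a2 ∈ gset := by decide
lemma hs1g : st a1 ∈ gset := by decide
lemma hs2g : st a2 ∈ gset := by decide

lemma stepA : ∀ u ∈ G2, ∃ a ∈ Shat, (u : Quaternion ℝ) = fq a := by
  intro u hu
  induction hu using Subgroup.closure_induction_left with
  | one => exact ⟨q4one, hq4S, fq_one.symm⟩
  | mul_left x hx y hy ih =>
    obtain ⟨a, ha, hya⟩ := ih
    rcases hx with rfl | rfl
    · exact ⟨d4 (a1 * a), (D1 a1 ha1g a ha).2,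
        by rw [Units.val_mul, hya]; exact fq_mul _ _ _ (D1 a1 ha1g a ha).1⟩
    · exact ⟨d4 (a2 * a), (D1 a2 ha2g a ha).2,
        by rw [Units.val_mul, hya]; exact fq_mul _ _ _ (D1 a2 ha2g a ha).1⟩
  | inv_mul_cancel x hx y hy ih =>
    obtain ⟨a, ha, hya⟩ := ih
    rcases hx with rfl | rfl
    · exact ⟨d4 (st a1 * a), (D1 _ hs1g a ha).2,
        by rw [Units.val_mul, hya]; exact fq_mul _ _ _ (D1 _ hs1g a ha).1⟩
    · exact ⟨d4 (st a2 * a), (D1 _ hs2g a ha).2,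
        by rw [Units.val_mul, hya]; exact fq_mul _ _ _ (D1 _ hs2g a ha).1⟩

lemma sub1 : rotorGenH3 ⊆ (G2 : Set (Quaternion ℝ)ˣ) := by
  rintro u ⟨p, hp, q, hq, hu⟩
  obtain ⟨a, ha, rfl⟩ := L1 p hp
  obtain ⟨b, hb, rfl⟩ := L1 q hq
  obtain ⟨heq, hc⟩ := C3 a ha b hb
  obtain ⟨v, hv, hvx⟩ := memS _ hc
  have huv : u = v := Units.ext (by rw [hu, hvx]; exact fq_mul _ _ _ heq)
  rwa [huv]

def p1h : QZ5 := ⟨⟨0,0⟩,⟨2,0⟩,⟨-1,-1⟩,⟨-1,1⟩⟩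
def q1h : QZ5 := ⟨⟨0,0⟩,⟨1,-1⟩,⟨-2,0⟩,⟨1,1⟩⟩
def p2h : QZ5 := ⟨⟨0,0⟩,⟨0,0⟩,⟨4,0⟩,⟨0,0⟩⟩
def q2h : QZ5 := ⟨⟨0,0⟩,⟨-1,1⟩,⟨2,0⟩,⟨-1,-1⟩⟩

lemma sub2 : ({u1, u2} : Set (Quaternion ℝ)ˣ) ⊆ rotorGenH3 := by
  rintro u (rfl | rfl)
  · exact ⟨fq p1h, L2 _ (by decide), fq q1h, L2 _ (by decide),
      (fq_mul p1h q1h a1 (by decide)).symm⟩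
  · exact ⟨fq p2h, L2 _ (by decide), fq q2h, L2 _ (by decide),
      (fq_mul p2h q2h a2 (by decide)).symm⟩

set_option maxRecDepth 100000 in
lemma Shat_card : Shat.card = 120 := by decide

/-- The subgroup of `ℍˣ` generated by all products `p·q` of pairs of the 30
unit roots of `H₃` has exactly 120 elements: the 30 reflections of the
icosahedral group `H₃` generate exactly 120 rotors (the binary icosahedral
group `2I`). -/
theorem rotor_group_H3 :
    Nat.card (Subgroup.closure rotorGenH3 : Subgroup (Quaternion ℝ)ˣ) = 120 := by
  have hG : Subgroup.closure rotorGenH3 = G2 := by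
    apply le_antisymm
    · exact (Subgroup.closure_le _).2 sub1
    · exact (Subgroup.closure_le _).2 (fun x hx => Subgroup.subset_closure (sub2 hx))
  rw [hG]
  have inj : Function.Injective (fun u : G2 => ((u : (Quaternion ℝ)ˣ) : Quaternion ℝ)) :=
    fun x y h => Subtype.ext (Units.ext h)
  have hrange : Set.range (fun u : G2 => ((u : (Quaternion ℝ)ˣ) : Quaternion ℝ)) =
      fq '' ↑Shat := by
    ext x
    constructor
    · rintro ⟨⟨u, hu⟩, rfl⟩
      obtain ⟨a, ha, h⟩ := stepA u hu
      exact ⟨a, ha, h.symm⟩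
    · rintro ⟨a, ha, rfl⟩
      obtain ⟨u, hu, h⟩ := memS a ha
      exact ⟨⟨u, hu⟩, h⟩
  calc Nat.card G2 = Nat.card (Set.range (fun u : G2 => ((u : (Quaternion ℝ)ˣ) : Quaternion ℝ)))
        := (Nat.card_range_of_injective inj).symm
    _ = 120 := by
        rw [hrange, Nat.card_coe_set_eq, Set.ncard_image_of_injective _ fq_inj,
          Set.ncard_coe_finset, Shat_card]
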